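/- Let K be an abelian group (written additively), Γ₀ a group, and H = ⊕_{Γ₀} K the group of finitely supported functions a : Γ₀ → K, on which Γ₀ acts by the shift (g·a)(x) = a(g⁻¹x). Let K = K₀ ⊇ K₁ ⊇ ⋯ be a decreasing sequence of finite-index subgroups of K with ⋂ₙ Kₙ = {0}, and Γ₀ = Γ₀,₀ ⊇ Γ₀,₁ ⊇ ⋯ a decreasing sequence of finite-index subgroups of Γ₀ with ⋂ₙ Γ₀,ₙ = {e}. For each n define the augmentation subgroup Hₙ = { a ∈ H : for every g ∈ Γ₀, Σ_{h ∈ Γ₀,ₙ} a(gh) ∈ Kₙ } (the sum is finite since a is finitely supported). Then: (i) each Hₙ is a subgroup of H invariant under the shift action of Γ₀; (ii) each Hₙ has finite index in H; and (iii) ⋂ₙ Hₙ = {0}. -/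

import Mathlib

open Function Set

private lemma finsum_mem_eq_sum_sub {α M : Type*} [AddCommMonoid M] (f : α → M) (S : Set α)
    (t : Finset α) (h1 : S ∩ support f ⊆ ↑t) (h2 : ↑t ⊆ S) :
    ∑ᶠ i ∈ S, f i = ∑ i ∈ t, f i := by
  refine finsum_mem_eq_sum_of_inter_support_eq f ?_
  ext x
  constructor
  · rintro ⟨hS, hsupp⟩; exact ⟨h1 ⟨hS, hsupp⟩, hsupp⟩
  · rintro ⟨ht, hsupp⟩; exact ⟨h2 ht, hsupp⟩

section

variable {K : Type*} [AddCommGroup K] {Γ₀ : Type*} [Group Γ₀]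

/-- The finsum over a subgroup's coset of a finsupp as a finite sum over an explicit finset. -/
private lemma finsum_shift_eq_sum (S : Set Γ₀) (g : Γ₀) (a : Γ₀ →₀ K) (t : Finset Γ₀)
    (h1 : ∀ h : Γ₀, h ∈ S → g * h ∈ a.support → h ∈ t) (h2 : ↑t ⊆ S) :
    ∑ᶠ h ∈ S, a (g * h) = ∑ h ∈ t, a (g * h) := by
  refine finsum_mem_eq_sum_sub _ _ _ ?_ h2
  rintro x ⟨hS, hsupp⟩
  exact h1 x hS (Finsupp.mem_support_iff.mpr hsupp)

private lemma finsum_shift_add (S : Set Γ₀) (g : Γ₀) (a b : Γ₀ →₀ K) :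
    ∑ᶠ h ∈ S, (a + b) (g * h) = (∑ᶠ h ∈ S, a (g * h)) + ∑ᶠ h ∈ S, b (g * h) := by
  classical
  set t : Finset Γ₀ := ((a.support ∪ b.support).preimage (g * ·)
    ((mul_right_injective g).injOn)).filter (· ∈ S) with ht
  have hmem : ∀ (c : Γ₀ →₀ K), c.support ⊆ a.support ∪ b.support →
      ∑ᶠ h ∈ S, c (g * h) = ∑ h ∈ t, c (g * h) := by
    intro c hc
    refine finsum_shift_eq_sum S g c t ?_ ?_
    · intro h hS hsupp
      simp only [ht, Finset.mem_filter, Finset.mem_preimage]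
      exact ⟨hc hsupp, hS⟩
    · intro x hx
      simp only [ht, Finset.coe_filter, mem_setOf_eq] at hx
      exact hx.2
  rw [hmem (a + b) (Finsupp.support_add), hmem a (Finset.subset_union_left),
    hmem b (Finset.subset_union_right)]
  simp [Finset.sum_add_distrib]

/-- translation invariance of the coset sum within the subgroup -/
private lemma finsum_shift_of_rel (G : Subgroup Γ₀) (g : Γ₀) {γ : Γ₀} (hγ : γ ∈ G)
    (a : Γ₀ →₀ K) :
    ∑ᶠ h ∈ (G : Set Γ₀), a (g * γ * h) = ∑ᶠ h ∈ (G : Set Γ₀), a (g * h) := by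
  have himg : (fun h => γ * h) '' (G : Set Γ₀) = (G : Set Γ₀) := by
    ext x
    constructor
    · rintro ⟨y, hy, rfl⟩; exact G.mul_mem hγ hy
    · intro hx; exact ⟨γ⁻¹ * x, G.mul_mem (G.inv_mem hγ) hx, by group⟩
  calc ∑ᶠ h ∈ (G : Set Γ₀), a (g * γ * h)
      = ∑ᶠ h ∈ (G : Set Γ₀), a (g * (γ * h)) := by simp only [mul_assoc]
    _ = ∑ᶠ i ∈ (fun h => γ * h) '' (G : Set Γ₀), a (g * i) :=
        (finsum_mem_image (f := fun i => a (g * i)) ((mul_right_injective γ).injOn)).symm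
    _ = ∑ᶠ i ∈ (G : Set Γ₀), a (g * i) := by rw [himg]

/-- the underlying function of the homomorphism whose kernel is `Hₙ` -/
private noncomputable def cosetSumFun (G : Subgroup Γ₀) (Kn : AddSubgroup K) (a : Γ₀ →₀ K) :
    (Γ₀ ⧸ G) → K ⧸ Kn := fun q => Quotient.liftOn' q
  (fun g => QuotientAddGroup.mk (∑ᶠ h ∈ (G : Set Γ₀), a (g * h)))
  (by
    intro g g' hrel
    have hγ : g⁻¹ * g' ∈ G := QuotientGroup.leftRel_apply.mp hrel
    have hgg : g * (g⁻¹ * g') = g' := by group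
    try simp only
    rw [← hgg, finsum_shift_of_rel G g hγ a])

private lemma cosetSumFun_mk (G : Subgroup Γ₀) (Kn : AddSubgroup K) (a : Γ₀ →₀ K) (g : Γ₀) :
    cosetSumFun G Kn a (Quotient.mk'' g) =
      QuotientAddGroup.mk (∑ᶠ h ∈ (G : Set Γ₀), a (g * h)) := rfl

/-- the homomorphism whose kernel is `Hₙ` -/
private noncomputable def cosetSumHom (G : Subgroup Γ₀) (Kn : AddSubgroup K) :
    (Γ₀ →₀ K) →+ ((Γ₀ ⧸ G) → K ⧸ Kn) :=
  AddMonoidHom.mk' (cosetSumFun G Kn) (by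
    intro a b
    funext q
    induction q using Quotient.inductionOn' with
    | h g =>
      show cosetSumFun G Kn (a + b) (Quotient.mk'' g)
        = cosetSumFun G Kn a (Quotient.mk'' g) + cosetSumFun G Kn b (Quotient.mk'' g)
      rw [cosetSumFun_mk, cosetSumFun_mk, cosetSumFun_mk, finsum_shift_add,
        QuotientAddGroup.mk_add])

private lemma cosetSumHom_mem_ker (G : Subgroup Γ₀) (Kn : AddSubgroup K) (a : Γ₀ →₀ K) :
    a ∈ (cosetSumHom G Kn).ker ↔
      ∀ g : Γ₀, (∑ᶠ h ∈ (G : Set Γ₀), a (g * h)) ∈ Kn := by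
  rw [AddMonoidHom.mem_ker, funext_iff]
  constructor
  · intro H g
    have := H (Quotient.mk'' g)
    rw [show (cosetSumHom G Kn) a = cosetSumFun G Kn a from rfl, cosetSumFun_mk] at this
    simpa [QuotientAddGroup.eq_zero_iff] using this
  · intro H q
    induction q using Quotient.inductionOn' with
    | h g =>
      rw [show (cosetSumHom G Kn) a = cosetSumFun G Kn a from rfl, cosetSumFun_mk]
      simpa [QuotientAddGroup.eq_zero_iff] using H g

end

/-- Given decreasing sequences of finite-index subgroups `Kₙ ≤ K` and
`Γ₀,ₙ ≤ Γ₀` with trivial intersections, the augmentation subgroups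
`Hₙ = {a ∈ ⊕_{Γ₀} K : ∀ g, Σ_{h ∈ Γ₀,ₙ} a(gh) ∈ Kₙ}` are shift-invariant finite-index
subgroups of `H = ⊕_{Γ₀} K` with `⋂ₙ Hₙ = {0}`. -/
theorem augmentation_subgroups {K : Type*} [AddCommGroup K] {Γ₀ : Type*} [Group Γ₀]
    (Kseq : ℕ → AddSubgroup K) (Gseq : ℕ → Subgroup Γ₀)
    (hK0 : Kseq 0 = ⊤) (hG0 : Gseq 0 = ⊤)
    (hKdec : ∀ n, Kseq (n + 1) ≤ Kseq n) (hGdec : ∀ n, Gseq (n + 1) ≤ Gseq n)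
    (hKfin : ∀ n, (Kseq n).FiniteIndex) (hGfin : ∀ n, (Gseq n).FiniteIndex)
    (hKinter : ∀ x : K, (∀ n, x ∈ Kseq n) → x = 0)
    (hGinter : ∀ g : Γ₀, (∀ n, g ∈ Gseq n) → g = 1) :
    (∀ n, ∃ Hn : AddSubgroup (Γ₀ →₀ K),
        ((Hn : Set (Γ₀ →₀ K)) =
            {a : Γ₀ →₀ K | ∀ g : Γ₀, (∑ᶠ h ∈ (Gseq n : Set Γ₀), a (g * h)) ∈ Kseq n}) ∧
        (∀ (g : Γ₀) (a : Γ₀ →₀ K),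
            a ∈ Hn → Finsupp.equivMapDomain (Equiv.mulLeft g) a ∈ Hn) ∧
        Hn.FiniteIndex) ∧
    (∀ a : Γ₀ →₀ K,
        (∀ (n : ℕ) (g : Γ₀), (∑ᶠ h ∈ (Gseq n : Set Γ₀), a (g * h)) ∈ Kseq n) → a = 0) := by
  classical
  have hKanti : Antitone Kseq := antitone_nat_of_succ_le hKdec
  have hGanti : Antitone Gseq := antitone_nat_of_succ_le hGdec
  constructor
  · intro n
    haveI := hKfin n
    haveI := hGfin n
    refine ⟨(cosetSumHom (Gseq n) (Kseq n)).ker, ?_, ?_, ?_⟩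
    · ext a
      simp only [SetLike.mem_coe, Set.mem_setOf_eq, cosetSumHom_mem_ker]
    · intro g a ha
      rw [cosetSumHom_mem_ker] at ha ⊢
      intro g'
      have heq : ∀ x : Γ₀, (Finsupp.equivMapDomain (Equiv.mulLeft g) a) x = a (g⁻¹ * x) := by
        intro x; simp [Finsupp.equivMapDomain_apply]
      have : ∑ᶠ h ∈ (Gseq n : Set Γ₀), (Finsupp.equivMapDomain (Equiv.mulLeft g) a) (g' * h)
          = ∑ᶠ h ∈ (Gseq n : Set Γ₀), a ((g⁻¹ * g') * h) := by
        apply finsum_mem_congr rfl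
        intro h _
        rw [heq]; rw [mul_assoc]
      rw [this]
      exact ha (g⁻¹ * g')
    · haveI : Finite ((Γ₀ ⧸ Gseq n) → K ⧸ Kseq n) := by
        haveI : Finite (Γ₀ ⧸ Gseq n) := (Gseq n).finite_quotient_of_finiteIndex
        haveI : Finite (K ⧸ Kseq n) := (Kseq n).finite_quotient_of_finiteIndex
        exact Pi.finite
      exact AddSubgroup.finiteIndex_ker _
  · intro a ha
    ext g
    refine hKinter (a g) ?_
    intro m
    -- choose N so that the only support point in the coset g * Gseq N is g itself
    have hex : ∀ s ∈ a.support, s ≠ g → ∃ n, g⁻¹ * s ∉ Gseq n := by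
      intro s _ hs
      by_contra hcon
      push_neg at hcon
      have h1 := hGinter (g⁻¹ * s) hcon
      exact hs (inv_mul_eq_one.mp h1).symm
    choose f hf using fun s (hs : s ∈ a.support) (hsg : s ≠ g) => hex s hs hsg
    -- get N via finite max
    obtain ⟨N, hN⟩ : ∃ N, ∀ s ∈ a.support, s ≠ g → g⁻¹ * s ∉ Gseq N := by
      by_cases hsup : ∃ s ∈ a.support, s ≠ g
      · set Ffun : Γ₀ → ℕ := fun s => if h : s ∈ a.support then
          (if h' : s ≠ g then f s h h' else 0) else 0 with hFfun
        refine ⟨a.support.sup Ffun, ?_⟩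
        intro s hs hsg hmem
        refine hf s hs hsg (hGanti ?_ hmem)
        calc f s hs hsg = Ffun s := by
              simp only [hFfun]
              rw [dif_pos hs, dif_pos hsg]
          _ ≤ _ := Finset.le_sup hs
      · push_neg at hsup
        exact ⟨0, fun s hs hsg => absurd (hsup s hs) (by simpa using hsg)⟩
    set n := max m N with hn
    have key : ∑ᶠ h ∈ (Gseq n : Set Γ₀), a (g * h) = a g := by
      rw [finsum_shift_eq_sum (Gseq n : Set Γ₀) g a {1}]
      · simp
      · intro h hh hsupp
        simp only [Finset.mem_singleton]
        by_contra hne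
        have hsg : g * h ≠ g := fun hc => hne (by rwa [mul_eq_left] at hc)
        have := hN (g * h) hsupp hsg
        rw [inv_mul_cancel_left] at this
        exact this (hGanti (le_max_right m N) hh)
      · intro x hx
        simp only [Finset.coe_singleton, Set.mem_singleton_iff] at hx
        subst hx
        exact (Gseq n).one_mem
    have := ha n g
    rw [key] at this
    exact hKanti (le_max_left m N) this
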